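/- Fix A ≥ 0, and for σ > 0 define a(σ) = (1 + √(1 + 4Aσ))/(2σ) and τ(σ) = a(σ)/(A + a(σ)) = 2/(1 + √(1+4Aσ)). Then |τ'(σ)| ≤ 1/(2σ) for all σ > 0. Consequently, if x, v ∈ ℝⁿ satisfy ‖x − x*‖ ≤ M₀ and ‖v − x*‖ ≤ M₀, then the curve y(σ) = x + τ(σ)(v − x) satisfies ‖y(s) − y(t)‖ ≤ (M₀/t)(s − t) for all s ≥ t > 0. -/

import Mathlib

open Real

lemma tau_hasDeriv (A : ℝ) (hA : 0 ≤ A) {σ : ℝ} (hσ : 0 < σ) :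
    HasDerivAt (fun s : ℝ => 2 / (1 + Real.sqrt (1 + 4 * A * s)))
      ((0 * (1 + Real.sqrt (1 + 4 * A * σ)) -
        2 * (1 / (2 * Real.sqrt (1 + 4 * A * σ)) * (4 * A))) /
        (1 + Real.sqrt (1 + 4 * A * σ)) ^ 2) σ := by
  have hu : (0:ℝ) < 1 + 4 * A * σ := by positivity
  have h1 : HasDerivAt (fun s : ℝ => 1 + 4 * A * s) (4 * A) σ := by
    simpa using ((hasDerivAt_id σ).const_mul (4 * A)).const_add 1
  have h2 : HasDerivAt (fun s : ℝ => Real.sqrt (1 + 4 * A * s))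
      (1 / (2 * Real.sqrt (1 + 4 * A * σ)) * (4 * A)) σ :=
    (Real.hasDerivAt_sqrt hu.ne').comp σ h1
  have h3 := h2.const_add 1
  have hrpos : 0 < Real.sqrt (1 + 4 * A * σ) := Real.sqrt_pos.mpr hu
  have hden : (1 + Real.sqrt (1 + 4 * A * σ)) ≠ 0 := by positivity
  exact (hasDerivAt_const σ (2:ℝ)).div h3 hden


lemma tau_diff_bound (A s t : ℝ) (hA : 0 ≤ A) (ht : 0 < t) (hts : t ≤ s) :
    |2 / (1 + Real.sqrt (1 + 4 * A * s)) - 2 / (1 + Real.sqrt (1 + 4 * A * t))|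
      ≤ (s - t) / (2 * t) := by
  have hs : 0 < s := lt_of_lt_of_le ht hts
  have hut : (0:ℝ) < 1 + 4 * A * t := by positivity
  have hus : (0:ℝ) < 1 + 4 * A * s := by positivity
  set rt := Real.sqrt (1 + 4 * A * t) with hrt
  set rs := Real.sqrt (1 + 4 * A * s) with hrs
  have hrtpos : 0 < rt := Real.sqrt_pos.mpr hut
  have hrspos : 0 < rs := Real.sqrt_pos.mpr hus
  have hrt2 : rt ^ 2 = 1 + 4 * A * t := Real.sq_sqrt hut.le
  have hrs2 : rs ^ 2 = 1 + 4 * A * s := Real.sq_sqrt hus.le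
  have hrt1 : 1 ≤ rt := by nlinarith
  have hle : rt ≤ rs := Real.sqrt_le_sqrt (by nlinarith)
  have hnp : 2 / (1 + rs) - 2 / (1 + rt) ≤ 0 := by
    have h : 2 / (1 + rs) ≤ 2 / (1 + rt) := by gcongr
    linarith
  rw [abs_of_nonpos hnp, neg_sub]
  have hne1 : (1 + rt) ≠ 0 := by positivity
  have hne2 : (1 + rs) ≠ 0 := by positivity
  have heq : 2 / (1 + rt) - 2 / (1 + rs) = 2 * (rs - rt) / ((1 + rt) * (1 + rs)) := by
    field_simp; ring
  rw [heq, div_le_div_iff₀ (by positivity) (by positivity)]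
  have hkey : (rs - rt) * (rs + rt) * t = (rt ^ 2 - 1) * (s - t) := by
    linear_combination t * hrs2 - t * hrt2 + (t - s) * hrt2
  have h5 : 4 * (rt - 1) ≤ (1 + rs) * (rs + rt) := by nlinarith
  have h6 : 4 * (rt ^ 2 - 1) ≤ (1 + rt) * ((1 + rs) * (rs + rt)) := by nlinarith
  have hsum : 0 < rs + rt := by linarith
  nlinarith [hkey, mul_le_mul_of_nonneg_right h6 (by linarith : (0:ℝ) ≤ s - t),
    mul_pos ht hsum]

/-- For `A ≥ 0` and `τ(σ) = 2/(1+√(1+4Aσ))`, one has `|τ'(σ)| ≤ 1/(2σ)` for `σ > 0`;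
consequently, if `‖x−x*‖ ≤ M₀` and `‖v−x*‖ ≤ M₀`, the curve
`y(σ) = x + τ(σ)(v−x)` satisfies `‖y(s)−y(t)‖ ≤ (M₀/t)(s−t)` for all `s ≥ t > 0`. -/
theorem stmt16 {n : ℕ} (A M₀ : ℝ) (hA : 0 ≤ A)
    (x v xstar : EuclideanSpace ℝ (Fin n))
    (hx : ‖x - xstar‖ ≤ M₀) (hv : ‖v - xstar‖ ≤ M₀) :
    (∀ σ : ℝ, 0 < σ →
      |deriv (fun s : ℝ => 2 / (1 + Real.sqrt (1 + 4 * A * s))) σ| ≤ 1 / (2 * σ)) ∧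
    (∀ s t : ℝ, 0 < t → t ≤ s →
      ‖(x + (2 / (1 + Real.sqrt (1 + 4 * A * s))) • (v - x))
          - (x + (2 / (1 + Real.sqrt (1 + 4 * A * t))) • (v - x))‖
        ≤ M₀ / t * (s - t)) := by
  constructor
  · intro σ hσ
    have hu : (0:ℝ) < 1 + 4 * A * σ := by positivity
    set r := Real.sqrt (1 + 4 * A * σ) with hr
    have hrpos : 0 < r := Real.sqrt_pos.mpr hu
    have hr2 : r ^ 2 = 1 + 4 * A * σ := Real.sq_sqrt hu.le
    have hr1 : 1 ≤ r := by nlinarith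
    rw [(tau_hasDeriv A hA hσ).deriv]
    rw [abs_div, abs_of_nonpos (by
        have : (0:ℝ) ≤ 2 * (1 / (2 * r) * (4 * A)) := by positivity
        linarith),
      abs_of_nonneg (by positivity : (0:ℝ) ≤ (1 + r) ^ 2)]
    rw [div_le_div_iff₀ (by positivity) (by positivity)]
    have key : 2 * (r - 1) ≤ r * (1 + r) := by nlinarith
    have h4A : 4 * A * σ = r ^ 2 - 1 := by linarith
    field_simp
    rw [← hr]
    nlinarith [mul_le_mul_of_nonneg_right key (by positivity : (0:ℝ) ≤ 2 * (1 + r))]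
  · intro s t ht hts
    have hs : 0 < s := lt_of_lt_of_le ht hts
    have hM0 : 0 ≤ M₀ := le_trans (norm_nonneg _) hx
    have hvx : ‖v - x‖ ≤ 2 * M₀ := by
      calc ‖v - x‖ = ‖(v - xstar) - (x - xstar)‖ := by abel_nf
      _ ≤ ‖v - xstar‖ + ‖x - xstar‖ := norm_sub_le _ _
      _ ≤ 2 * M₀ := by linarith
    have hdiff : (x + (2 / (1 + Real.sqrt (1 + 4 * A * s))) • (v - x))
        - (x + (2 / (1 + Real.sqrt (1 + 4 * A * t))) • (v - x))
        = ((2 / (1 + Real.sqrt (1 + 4 * A * s))) - (2 / (1 + Real.sqrt (1 + 4 * A * t)))) • (v - x) := by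
      rw [sub_smul]; abel
    rw [hdiff, norm_smul, Real.norm_eq_abs]
    have habs := tau_diff_bound A s t hA ht hts
    calc |2 / (1 + Real.sqrt (1 + 4 * A * s)) - 2 / (1 + Real.sqrt (1 + 4 * A * t))| * ‖v - x‖
        ≤ (s - t) / (2 * t) * (2 * M₀) := by
          apply mul_le_mul habs hvx (norm_nonneg _) (div_nonneg (by linarith) (by positivity))
      _ = M₀ / t * (s - t) := by field_simp
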